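/- For all natural numbers n, m, the polynomial L := L_{n,m}(X,Y) ∈ ℚ[X,Y] satisfies the system of partial differential equations: X·(∂²L/∂X²) + Y·(∂²L/∂X∂Y) + (1−X)·(∂L/∂X) + n·L = 0 and X·(∂²L/∂Y∂X) + Y·(∂²L/∂Y²) + (1−Y)·(∂L/∂Y) + m·L = 0. -/

import Mathlib

open MvPolynomial

/-- The two-variable Laguerre polynomial `L_{n,m}(X,Y) ∈ ℚ[X,Y]`,
with `X = X 0` and `Y = X 1`. -/
noncomputable def LagQ (n m : ℕ) : MvPolynomial (Fin 2) ℚ :=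
  ∑ i ∈ Finset.range (m + 1), ∑ s ∈ Finset.range (n + 1),
    MvPolynomial.C ((-1 : ℚ) ^ (i + s) / ((i.factorial : ℚ) * (s.factorial : ℚ)) *
        ((m + n).choose (m - i) : ℚ) * ((n + i).choose (n - s) : ℚ)) *
      MvPolynomial.X 0 ^ s * MvPolynomial.X 1 ^ i

open Finset

noncomputable def Lgen (M N : ℕ) (c : ℕ → ℕ → ℚ) : MvPolynomial (Fin 2) ℚ :=
  ∑ i ∈ range (M+1), ∑ s ∈ range (N+1), C (c i s) * X 0 ^ s * X 1 ^ i

lemma term_d0 (b : ℚ) (s i : ℕ) :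
    pderiv 0 (C b * X 0 ^ (s+1) * X 1 ^ i : MvPolynomial (Fin 2) ℚ)
      = C (b*(s+1)) * X 0 ^ s * X 1 ^ i := by
  simp [pderiv_mul, pderiv_pow, pderiv_C, C_mul]
  push_cast [C_mul]
  ring

lemma term_Xd0 (b : ℚ) (s i : ℕ) :
    X 0 * pderiv 0 (C b * X 0 ^ s * X 1 ^ i : MvPolynomial (Fin 2) ℚ)
      = C (b*s) * X 0 ^ s * X 1 ^ i := by
  cases s with
  | zero => simp [pderiv_mul, pderiv_C]
  | succ s => rw [term_d0]; push_cast [C_mul]; ring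

lemma term_Xd1 (b : ℚ) (s i : ℕ) :
    X 1 * pderiv 1 (C b * X 0 ^ s * X 1 ^ i : MvPolynomial (Fin 2) ℚ)
      = C (b*i) * X 0 ^ s * X 1 ^ i := by
  cases i with
  | zero => simp [pderiv_mul, pderiv_C]
  | succ i =>
    simp [pderiv_mul, pderiv_pow, pderiv_C]
    push_cast [C_mul]
    ring

lemma core (M N : ℕ) (c : ℕ → ℕ → ℚ)
    (h : ∀ i ∈ range (M+1), ∀ s ∈ range N,
      ((s:ℚ)+1)*((s:ℚ)+(i:ℚ)+1)*c i (s+1) + ((N:ℚ) - s)*c i s = 0) :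
    X 0 * pderiv 0 (pderiv 0 (Lgen M N c)) +
      X 1 * pderiv 1 (pderiv 0 (Lgen M N c)) +
      (1 - X 0) * pderiv 0 (Lgen M N c) +
      C (N:ℚ) * Lgen M N c = 0 := by
  have hD : pderiv 0 (Lgen M N c)
      = ∑ i ∈ range (M+1), ∑ s ∈ range N,
          C (c i (s+1)*(s+1)) * X 0 ^ s * X 1 ^ i := by
    unfold Lgen
    rw [map_sum]
    refine Finset.sum_congr rfl fun i _ => ?_
    rw [Finset.sum_range_succ', map_add, map_sum]
    have h0 : pderiv 0 (C (c i 0) * X 0 ^ 0 * X 1 ^ i : MvPolynomial (Fin 2) ℚ) = 0 := by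
      simp [pderiv_mul, pderiv_C, pderiv_pow]
    rw [h0, add_zero]
    exact Finset.sum_congr rfl fun s _ => term_d0 _ _ _
  have hXL : X 0 * pderiv 0 (Lgen M N c)
      = ∑ i ∈ range (M+1), ∑ s ∈ range (N+1), C (c i s * s) * X 0 ^ s * X 1 ^ i := by
    unfold Lgen
    rw [map_sum, Finset.mul_sum]
    refine Finset.sum_congr rfl fun i _ => ?_
    rw [map_sum, Finset.mul_sum]
    exact Finset.sum_congr rfl fun s _ => term_Xd0 _ _ _
  have key : X 0 * pderiv 0 (pderiv 0 (Lgen M N c)) +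
      X 1 * pderiv 1 (pderiv 0 (Lgen M N c)) + pderiv 0 (Lgen M N c) +
      (C (N:ℚ) * Lgen M N c - X 0 * pderiv 0 (Lgen M N c)) = 0 := by
    rw [hXL, hD]
    rw [map_sum, Finset.mul_sum, map_sum, Finset.mul_sum]
    unfold Lgen
    rw [Finset.mul_sum, ← Finset.sum_sub_distrib, ← Finset.sum_add_distrib,
      ← Finset.sum_add_distrib, ← Finset.sum_add_distrib]
    refine Finset.sum_eq_zero fun i hi => ?_
    rw [map_sum, Finset.mul_sum, map_sum, Finset.mul_sum, Finset.mul_sum,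
      ← Finset.sum_sub_distrib, ← Finset.sum_add_distrib, ← Finset.sum_add_distrib]
    -- now reduce the (N+1)-range sum to N-range
    have hlast : ∑ s ∈ range (N+1),
        (C ((N:ℚ)) * (C (c i s) * X 0 ^ s * X 1 ^ i) - C (c i s * s) * X 0 ^ s * X 1 ^ i
          : MvPolynomial (Fin 2) ℚ)
        = ∑ s ∈ range N, C (((N:ℚ) - s) * c i s) * X 0 ^ s * X 1 ^ i := by
      rw [Finset.sum_range_succ]
      have hz : (C ((N:ℚ)) * (C (c i N) * X 0 ^ N * X 1 ^ i)
          - C (c i N * N) * X 0 ^ N * X 1 ^ i : MvPolynomial (Fin 2) ℚ) = 0 := by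
        simp only [C_mul]; ring
      rw [hz, add_zero]
      refine Finset.sum_congr rfl fun s _ => ?_
      simp only [C_mul, C_sub]; ring
    rw [hlast, ← Finset.sum_add_distrib]
    refine Finset.sum_eq_zero fun s hs => ?_
    rw [term_Xd0, term_Xd1]
    have hc : c i (s+1)*((s:ℚ)+1)*(s:ℚ) + c i (s+1)*((s:ℚ)+1)*(i:ℚ)
        + c i (s+1)*((s:ℚ)+1) + ((N:ℚ)-(s:ℚ))*c i s = 0 := by
      linear_combination h i hi s hs
    have hC := congrArg (MvPolynomial.C (σ := Fin 2)) hc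
    simp only [map_add, map_mul, map_sub, map_zero] at hC ⊢
    linear_combination (X 0 ^ s * X 1 ^ i : MvPolynomial (Fin 2) ℚ) * hC
  linear_combination key

def cL (n m i s : ℕ) : ℚ :=
  (-1 : ℚ) ^ (i + s) / ((i.factorial : ℚ) * (s.factorial : ℚ)) *
    ((m + n).choose (m - i) : ℚ) * ((n + i).choose (n - s) : ℚ)

lemma hyp1 (n m : ℕ) : ∀ i ∈ range (m+1), ∀ s ∈ range n,
    ((s:ℚ)+1)*((s:ℚ)+(i:ℚ)+1)*(cL n m i (s+1)) + ((n:ℚ) - s)*(cL n m i s) = 0 := by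
  intro i _ s hs
  rw [Finset.mem_range] at hs
  have hN : ((n+i).choose (n-s) : ℚ) * ((n:ℚ) - s)
      = ((n+i).choose (n-s-1) : ℚ) * ((i:ℚ)+(s:ℚ)+1) := by
    have h := Nat.choose_succ_right_eq (n+i) (n-s-1)
    rw [Nat.sub_add_cancel (by omega : 1 ≤ n - s)] at h
    have h2 : n + i - (n - s - 1) = i + s + 1 := by omega
    rw [h2] at h
    have := congrArg (fun x : ℕ => (x : ℚ)) h
    push_cast at this
    rw [Nat.cast_sub (le_of_lt hs)] at this
    linarith [this]
  unfold cL
  have h1 : n - (s+1) = n - s - 1 := by omega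
  rw [h1]
  have hfi : ((i.factorial : ℚ)) ≠ 0 := by positivity
  have hfs : ((s.factorial : ℚ)) ≠ 0 := by positivity
  have hE : (-1:ℚ)^(i+(s+1)) = -(-1:ℚ)^(i+s) := by rw [← add_assoc, pow_succ]; ring
  have hG : (((s+1).factorial : ℕ) : ℚ) = ((s:ℚ)+1) * (s.factorial:ℚ) := by
    rw [Nat.factorial_succ]; push_cast; ring
  rw [hE, hG]
  have hs1 : ((s:ℚ)+1) ≠ 0 := by positivity
  field_simp
  linear_combination ((-1:ℚ)^(i+s) * ((m + n).choose (m - i) : ℚ)) * hN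


lemma hyp2 (n m : ℕ) : ∀ i ∈ range (n+1), ∀ s ∈ range m,
    ((s:ℚ)+1)*((s:ℚ)+(i:ℚ)+1)*(cL n m (s+1) i) + ((m:ℚ) - s)*(cL n m s i) = 0 := by
  intro i hi s hs
  rw [Finset.mem_range] at hs hi
  have hi' : i ≤ n := by omega
  have hQ1 : ((m + n).choose (m - s) : ℚ) * ((m:ℚ) - s)
      = ((m + n).choose (m - s - 1) : ℚ) * ((n:ℚ)+(s:ℚ)+1) := by
    have h := Nat.choose_succ_right_eq (m+n) (m-s-1)
    rw [Nat.sub_add_cancel (by omega : 1 ≤ m - s)] at h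
    rw [(by omega : m + n - (m - s - 1) = n + s + 1)] at h
    have := congrArg (fun x : ℕ => (x : ℚ)) h
    push_cast at this
    rw [Nat.cast_sub (le_of_lt hs)] at this
    linarith [this]
  have hQ2 : ((n + s).choose (n - i) : ℚ) * ((n:ℚ)+(s:ℚ)+1)
      = ((n + s + 1).choose (n - i) : ℚ) * ((s:ℚ)+(i:ℚ)+1) := by
    have h := Nat.choose_mul_succ_eq (n+s) (n-i)
    rw [(by omega : n + s + 1 - (n - i) = s + i + 1)] at h
    have := congrArg (fun x : ℕ => (x : ℚ)) h
    push_cast at this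
    linarith [this]
  have hv : ((n:ℚ)+(s:ℚ)+1) ≠ 0 := by positivity
  have hMain : ((m:ℚ)-s) * (((m + n).choose (m - s) : ℚ) * ((n + s).choose (n - i) : ℚ))
      = ((s:ℚ)+(i:ℚ)+1) * (((m + n).choose (m - s - 1) : ℚ) * ((n + s + 1).choose (n - i) : ℚ)) := by
    refine mul_left_cancel₀ hv ?_
    linear_combination (((n:ℚ)+(s:ℚ)+1) * ((n + s).choose (n - i) : ℚ)) * hQ1 +
      (((n:ℚ)+(s:ℚ)+1) * ((m + n).choose (m - s - 1) : ℚ)) * hQ2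
  unfold cL
  rw [(by omega : m - (s+1) = m - s - 1), (by omega : n + (s+1) = n + s + 1)]
  have hfi : ((i.factorial : ℚ)) ≠ 0 := by positivity
  have hfs : ((s.factorial : ℚ)) ≠ 0 := by positivity
  have hE : (-1:ℚ)^(s+1+i) = -(-1:ℚ)^(s+i) := by rw [(by omega : s+1+i = (s+i)+1), pow_succ]; ring
  have hG : (((s+1).factorial : ℕ) : ℚ) = ((s:ℚ)+1) * (s.factorial:ℚ) := by
    rw [Nat.factorial_succ]; push_cast; ring
  rw [hE, hG]
  field_simp
  linear_combination ((-1:ℚ)^(s+i)) * hMain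

def sw : Fin 2 → Fin 2 := ![1, 0]

lemma sw_inj : Function.Injective sw := by decide

lemma sw0 : sw 0 = 1 := rfl
lemma sw1 : sw 1 = 0 := rfl

lemma swap_Lgen (n m : ℕ) (c : ℕ → ℕ → ℚ) :
    rename sw (Lgen n m (fun i s => c s i)) = Lgen m n c := by
  unfold Lgen
  rw [map_sum, Finset.sum_comm]
  refine Finset.sum_congr rfl fun i _ => ?_
  rw [map_sum]
  refine Finset.sum_congr rfl fun s _ => ?_
  rw [map_mul, map_mul, map_pow, map_pow, rename_C, rename_X, rename_X, sw0, sw1]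
  ring

theorem stmt_4 (n m : ℕ) :
    MvPolynomial.X 0 * pderiv 0 (pderiv 0 (LagQ n m)) +
        MvPolynomial.X 1 * pderiv 1 (pderiv 0 (LagQ n m)) +
        (1 - MvPolynomial.X 0) * pderiv 0 (LagQ n m) +
        (n : MvPolynomial (Fin 2) ℚ) * LagQ n m = 0 ∧
      MvPolynomial.X 0 * pderiv 0 (pderiv 1 (LagQ n m)) +
        MvPolynomial.X 1 * pderiv 1 (pderiv 1 (LagQ n m)) +
        (1 - MvPolynomial.X 1) * pderiv 1 (LagQ n m) +
        (m : MvPolynomial (Fin 2) ℚ) * LagQ n m = 0 := by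
  have hL : LagQ n m = Lgen m n (cL n m) := rfl
  have hcast : ((n : MvPolynomial (Fin 2) ℚ)) = C ((n:ℚ)) := by
    simp [map_natCast]
  have hcastm : ((m : MvPolynomial (Fin 2) ℚ)) = C ((m:ℚ)) := by
    simp [map_natCast]
  constructor
  · rw [hL, hcast]
    exact core m n (cL n m) (hyp1 n m)
  · -- second equation via swapping variables
    have h2 := core n m (fun i s => cL n m s i) (hyp2 n m)
    have h3 := congrArg (rename sw) h2
    simp only [map_add, map_mul, map_sub, map_one, map_zero, rename_X, rename_C,
      ← pderiv_rename sw_inj, sw0, sw1, swap_Lgen] at h3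
    rw [hL, hcastm]
    linear_combination h3
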